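/- If [b₁,…,b_r] = n/a as a Hirzebruch–Jung continued fraction (with all b_i ≥ 2, gcd(a,n)=1, 0 < a < n), then the reversed string satisfies [b_r,…,b₁] = n/a′, where a′ is the unique integer with 0 < a′ < n and a·a′ ≡ 1 (mod n). -/

import Mathlib

/-- The Hirzebruch–Jung continued fraction `[b₁,…,b_r] = b₁ − 1/(b₂ − 1/(⋯ − 1/b_r))`,
evaluated in `ℚ` (using the convention `1/0 = 0`, so `hj [b] = b`). -/
def hj : List ℕ → ℚ
  | [] => 0
  | b :: l => (b : ℚ) - 1 / hj l

/-- The matrix `[[b₁,-1],[1,0]]⋯[[b_r,-1],[1,0]]` as a quadruple `(p,q,r,s)`. -/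
def hjM : List ℕ → ℤ × ℤ × ℤ × ℤ
  | [] => (1, 0, 0, 1)
  | b :: l => ((b : ℤ) * (hjM l).1 - (hjM l).2.2.1, (b : ℤ) * (hjM l).2.1 - (hjM l).2.2.2,
      (hjM l).1, (hjM l).2.1)

def hjmul (x y : ℤ × ℤ × ℤ × ℤ) : ℤ × ℤ × ℤ × ℤ :=
  (x.1 * y.1 + x.2.1 * y.2.2.1, x.1 * y.2.1 + x.2.1 * y.2.2.2,
   x.2.2.1 * y.1 + x.2.2.2 * y.2.2.1, x.2.2.1 * y.2.1 + x.2.2.2 * y.2.2.2)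

lemma hjM_append (l m : List ℕ) : hjM (l ++ m) = hjmul (hjM l) (hjM m) := by
  induction l with
  | nil => simp [hjM, hjmul]
  | cons b l ih =>
      simp only [List.cons_append, hjM, List.append_eq, ih, hjmul, Prod.mk.injEq]
      exact ⟨by ring, by ring, trivial⟩

lemma hjM_det (l : List ℕ) :
    (hjM l).1 * (hjM l).2.2.2 - (hjM l).2.1 * (hjM l).2.2.1 = 1 := by
  induction l with
  | nil => simp [hjM]
  | cons b l ih => simp only [hjM]; nlinarith [ih]

lemma hjM_reverse (l : List ℕ) :
    hjM l.reverse = ((hjM l).1, -(hjM l).2.2.1, -(hjM l).2.1, (hjM l).2.2.2) := by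
  induction l with
  | nil => simp [hjM]
  | cons b l ih =>
      rw [List.reverse_cons, hjM_append, ih]
      simp only [hjM, hjmul, Prod.mk.injEq]
      refine ⟨by ring, by ring, by ring, by ring⟩

lemma hj_key (B : List ℕ) (hB : ∀ x ∈ B, 2 ≤ x) (hne : B ≠ []) :
    1 ≤ (hjM B).2.2.1 ∧ (hjM B).2.2.1 < (hjM B).1 ∧
      hj B = ((hjM B).1 : ℚ) / ((hjM B).2.2.1 : ℚ) := by
  induction B with
  | nil => exact absurd rfl hne
  | cons b l ih =>
      have hb : (2 : ℤ) ≤ (b : ℤ) := by exact_mod_cast hB b (by simp)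
      rcases eq_or_ne l [] with rfl | hl
      · refine ⟨by simp [hjM], by simp only [hjM]; omega, ?_⟩
        simp [hjM, hj]
      · obtain ⟨h1, h2, h3⟩ := ih (fun x hx => hB x (by simp [hx])) hl
        have hp0 : (0 : ℤ) < (hjM l).1 := by omega
        refine ⟨by simpa [hjM] using h1.trans h2.le, ?_, ?_⟩
        · simp only [hjM]; nlinarith
        · simp only [hjM, hj, h3]
          have hpQ : ((hjM l).1 : ℚ) ≠ 0 := by exact_mod_cast hp0.ne'
          have hrQ : ((hjM l).2.2.1 : ℚ) ≠ 0 := by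
            exact_mod_cast (show (0:ℤ) < (hjM l).2.2.1 by omega).ne'
          field_simp
          norm_cast

/-- If `[b₁,…,b_r] = n/a`, then the reversed string satisfies `[b_r,…,b₁] = n/a′`,
where `a′` is the inverse of `a` modulo `n` with `0 < a′ < n`. -/
theorem hj_reverse (B : List ℕ) (n a a' : ℕ)
    (hB : ∀ x ∈ B, 2 ≤ x) (hBne : B ≠ [])
    (ha : 0 < a) (han : a < n) (hcop : Nat.gcd a n = 1)
    (h1 : hj B = (n : ℚ) / a)
    (ha' : 0 < a') (ha'n : a' < n) (hinv : a * a' ≡ 1 [MOD n]) :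
    hj B.reverse = (n : ℚ) / a' := by
  obtain ⟨hr1, hrp, heq⟩ := hj_key B hB hBne
  set p := (hjM B).1 with hp
  set q := (hjM B).2.1 with hq
  set r := (hjM B).2.2.1 with hr
  set s := (hjM B).2.2.2 with hs
  have hdet : p * s - q * r = 1 := hjM_det B
  have hp0 : (0 : ℤ) < p := by omega
  -- p = n, r = a
  have hpa : p * (a : ℤ) = (n : ℤ) * r := by
    have hrQ : ((r : ℤ) : ℚ) ≠ 0 := by exact_mod_cast (by omega : r ≠ 0)
    have haQ : ((a : ℚ)) ≠ 0 := by exact_mod_cast ha.ne'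
    rw [heq, div_eq_div_iff hrQ haQ] at h1
    exact_mod_cast h1
  have hcop_pr : IsCoprime p r := ⟨s, -q, by linarith⟩
  have hcop_na : IsCoprime (n : ℤ) (a : ℤ) := by
    rw [Int.isCoprime_iff_gcd_eq_one, Int.gcd_natCast_natCast, Nat.gcd_comm]
    exact hcop
  have hpn : p = (n : ℤ) := by
    have h1 : p ∣ (n : ℤ) := hcop_pr.dvd_of_dvd_mul_right ⟨a, by linarith [hpa]⟩
    have h2 : (n : ℤ) ∣ p := hcop_na.dvd_of_dvd_mul_right ⟨r, by linarith [hpa]⟩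
    exact Int.dvd_antisymm hp0.le (by exact_mod_cast Nat.zero_le n) h1 h2
  have hra : r = (a : ℤ) := by
    have hn0 : (n : ℤ) ≠ 0 := by exact_mod_cast (by omega : n ≠ 0)
    have := hpa
    rw [hpn] at this
    exact (mul_left_cancel₀ hn0 this).symm
  -- the reversed fraction
  have hBr : ∀ x ∈ B.reverse, 2 ≤ x := by simpa using hB
  have hBrne : B.reverse ≠ [] := by simpa using hBne
  obtain ⟨hr1', hrp', heq'⟩ := hj_key B.reverse hBr hBrne
  rw [hjM_reverse] at hr1' hrp' heq'
  simp only [← hp, ← hq, ← hr, ← hs] at hr1' hrp' heq'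
  -- identify -q with a'
  have key : -q = (a' : ℤ) := by
    have hmod : (a : ℤ) * (-q) ≡ (a : ℤ) * (a' : ℤ) [ZMOD (n : ℤ)] := by
      have h1 : (a : ℤ) * (-q) ≡ 1 [ZMOD (n : ℤ)] := by
        have : (a : ℤ) * (-q) = 1 - (n : ℤ) * s := by rw [hpn, hra] at hdet; linarith
        rw [this]
        simpa using (Int.ModEq.refl 1).sub ((Int.modEq_zero_iff_dvd.mpr ⟨s, rfl⟩))
      have h2 : (a : ℤ) * (a' : ℤ) ≡ 1 [ZMOD (n : ℤ)] := by
        have := hinv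
        rw [← Int.natCast_modEq_iff] at this
        exact_mod_cast this
      exact h1.trans h2.symm
    have hg : Int.gcd (n : ℤ) (a : ℤ) = 1 := by
      rw [Int.gcd_natCast_natCast, Nat.gcd_comm]; exact hcop
    have hmod2 : -q ≡ (a' : ℤ) [ZMOD (n : ℤ)] := by
      have := Int.ModEq.cancel_left_div_gcd (c := (a : ℤ)) (by exact_mod_cast (by omega : 0 < n)) hmod
      simpa [hg] using this
    have hd : (n : ℤ) ∣ (-q) - (a' : ℤ) := Int.ModEq.dvd hmod2.symm
    have hb1 : -q < (n : ℤ) := by rw [← hpn]; exact hrp'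
    have hb2 : (1 : ℤ) ≤ -q := hr1'
    have hb3 : (a' : ℤ) < n := by exact_mod_cast ha'n
    have hb4 : (1 : ℤ) ≤ (a' : ℤ) := by exact_mod_cast ha'
    have h0 : -q - (a' : ℤ) = 0 :=
      Int.eq_zero_of_abs_lt_dvd hd (by rw [abs_lt]; constructor <;> omega)
    omega
  rw [heq', key, hpn]
  push_cast
  ring
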